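/- arXiv:1203.3414 — 2 statements merged into one kernel-verified Lean document; each statement's English description precedes it below -/
import Mathlib

section
/- Under the assumptions of the previous statement, if additionally (·|·) is σ-invariant, then for every α in Q one has |α|² = 2 L(α,α), where |α|² = (α|α) and L(α,β) = ((1-σ)^{-1}α|β). Consequently ε(α,α) = (-1)^{L(α,α)} = (-1)^{|α|²/2} = (-1)^{|α|²(|α|²+1)/2}. -/
/-- If in addition the symmetric bilinear form `B` is `σ`-invariant, then
`|α|² = 2 L(α,α)` for every `α`, and consequently
`ε(α,α) = (-1)^{L(α,α)} = (-1)^{|α|²/2} = (-1)^{|α|²(|α|²+1)/2}`. -/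
theorem seifert_diagonal
    (Q : Type*) [AddCommGroup Q]
    (B : Q → Q → ℤ)
    (hB₁ : ∀ x x' y : Q, B (x + x') y = B x y + B x' y)
    (hB₂ : ∀ x y y' : Q, B x (y + y') = B x y + B x y')
    (hBsym : ∀ x y : Q, B x y = B y x)
    (σ : AddAut Q)
    (hσB : ∀ x y : Q, B (σ x) (σ y) = B x y)
    (hσord : IsOfFinAddOrder σ)
    (T : Q →+ Q)
    (hT₁ : ∀ x : Q, T x - σ (T x) = x)
    (hT₂ : ∀ x : Q, T (x - σ x) = x)
    (L : Q → Q → ℤ) (hL : ∀ α β, L α β = B (T α) β)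
    (ε : Q → Q → ℤˣ) (hε : ∀ α β, ε α β = Int.negOnePow (L α β)) :
    ∀ α : Q,
      B α α = 2 * L α α ∧
      ε α α = Int.negOnePow (B α α / 2) ∧
      ε α α = Int.negOnePow (B α α * (B α α + 1) / 2) := by
  intro α
  have hB0 : ∀ y : Q, B 0 y = 0 := by
    intro y
    have := hB₁ 0 0 y
    simp at this
    omega
  have hBneg : ∀ x y : Q, B (-x) y = -(B x y) := by
    intro x y
    have := hB₁ x (-x) y
    simp [hB0] at this
    omega
  have hBsub : ∀ x x' y : Q, B (x - x') y = B x y - B x' y := by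
    intro x x' y
    rw [sub_eq_add_neg, hB₁, hBneg]; ring
  have hBsub' : ∀ x y y' : Q, B x (y - y') = B x y - B x y' := by
    intro x y y'
    rw [hBsym, hBsub, hBsym, hBsym y']
  have key : B α α = 2 * L α α := by
    have h1 : B α α = B (T α - σ (T α)) (T α - σ (T α)) := by rw [hT₁]
    rw [hL]
    have h2 : B (T α) α = B (T α) (T α - σ (T α)) := by rw [hT₁]
    rw [h1, h2, hBsub, hBsub', hBsub', hσB, hBsym (σ (T α)) (T α)]
    ring
  refine ⟨key, ?_, ?_⟩
  · rw [hε, key]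
    congr 1
    omega
  · rw [hε, key]
    have h3 : 2 * L α α * (2 * L α α + 1) / 2 = L α α + 2 * (L α α * L α α) := by
      have : 2 * L α α * (2 * L α α + 1) = 2 * (L α α + 2 * (L α α * L α α)) := by ring
      omega
    rw [h3, Int.negOnePow_add]
    simp [Int.negOnePow_two_mul]
end

section
/- In the formal power series setting, for a rational (or real) number p and formal variables, one has the expansion identity: (1/k!)·(-∂_{ζ₁})^k (ζ₁^p ζ₂^{-p} δ(ζ₁,ζ₂)) = Σ_{i=0}^k (-1)^i C(p,i) ζ₁^{p-i} ζ₂^{-p} (ι_{ζ₁,ζ₂} - ι_{ζ₂,ζ₁}) (ζ₁-ζ₂)^{-1-k+i}, where δ(ζ₁,ζ₂) = Σ_{j∈ℤ} ζ₁^{-j-1}ζ₂^j is the formal delta function and ι denotes expansion in the indicated domain. -/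
/-- Generalized binomial coefficient `C(p, k) = p(p-1)⋯(p-k+1)/k!`. -/
noncomputable def genBinom (p : ℚ) (k : ℕ) : ℚ :=
  (∏ j ∈ Finset.range k, (p - j)) / (Nat.factorial k)

lemma descP (p : ℚ) (k : ℕ) :
    Polynomial.smeval (descPochhammer ℤ k) p = ∏ j ∈ Finset.range k, (p - j) := by
  induction k with
  | zero => simp
  | succ n ih =>
    rw [descPochhammer_succ_right, Polynomial.smeval_mul, ih, Finset.prod_range_succ]
    congr 1
    simp [Polynomial.smeval_sub, Polynomial.smeval_natCast]

lemma genBinom_eq_choose (p : ℚ) (k : ℕ) : genBinom p k = Ring.choose p k := by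
  have h := Ring.descPochhammer_eq_factorial_smul_choose p k
  rw [descP] at h
  rw [genBinom, h, nsmul_eq_mul]
  field_simp

lemma genBinom_natCast (n k : ℕ) : genBinom (n : ℚ) k = Nat.choose n k := by
  rw [genBinom_eq_choose, Ring.choose_natCast]

lemma genBinom_reflect (x : ℚ) (k : ℕ) :
    (-1 : ℚ) ^ k * genBinom x k = genBinom ((k : ℚ) - 1 - x) k := by
  rw [genBinom, genBinom, ← Finset.prod_range_reflect (fun j => ((k : ℚ) - 1 - x) - j)]
  rw [← mul_div_assoc]
  congr 1
  rw [show ((-1:ℚ))^k = ∏ _j ∈ Finset.range k, (-1:ℚ) by simp, ← Finset.prod_mul_distrib]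
  apply Finset.prod_congr rfl
  intro i hi
  rw [Finset.mem_range] at hi
  have : ((k - 1 - i : ℕ) : ℚ) = (k : ℚ) - 1 - i := by
    push_cast [Nat.cast_sub (by omega : i ≤ k - 1), Nat.cast_sub (by omega : 1 ≤ k)]
    ring
  rw [this]
  ring

lemma genBinom_vandermonde (x y : ℚ) (k : ℕ) :
    genBinom (x + y) k = ∑ i ∈ Finset.range (k + 1), genBinom x i * genBinom y (k - i) := by
  simp only [genBinom_eq_choose]
  rw [Ring.add_choose_eq k (Commute.all x y), Finset.Nat.sum_antidiagonal_eq_sum_range_succ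
    (fun a b => Ring.choose x a * Ring.choose y b)]

/-- the formal-distribution identity
`(1/k!)(-∂_{ζ₁})^k (ζ₁^p ζ₂^{-p} δ(ζ₁,ζ₂))
  = ∑_{i=0}^k (-1)^i C(p,i) ζ₁^{p-i} ζ₂^{-p} (ι_{ζ₁,ζ₂} - ι_{ζ₂,ζ₁})(ζ₁-ζ₂)^{-1-k+i}`,
stated as the equality of the coefficients of the monomial `ζ₁^{p-1-k-j} ζ₂^{j-p}`
on both sides, for every `j ∈ ℤ`.  On the left, since
`ζ₁^p ζ₂^{-p} δ(ζ₁,ζ₂) = ∑_{j∈ℤ} ζ₁^{p-j-1} ζ₂^{j-p}`, the coefficient is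
`(-1)^k C(p-j-1, k)`.  On the right, the `ι_{ζ₁,ζ₂}`-expansion of
`(ζ₁-ζ₂)^{n}` (with `n = -1-k+i`) contributes `(-1)^j C(n, j)` for `j ≥ 0`,
and the `ι_{ζ₂,ζ₁}`-expansion contributes `(-1)^j C(n, n-j)` when `n - j ≥ 0`. -/
theorem delta_derivative_expansion (p : ℚ) (k : ℕ) (j : ℤ) :
    (-1 : ℚ) ^ k * genBinom (p - j - 1) k
      = ∑ i ∈ Finset.range (k + 1), (-1 : ℚ) ^ i * genBinom p i *
          ((if 0 ≤ j then
              (-1 : ℚ) ^ j * genBinom (((-1 - (k : ℤ) + i : ℤ) : ℚ)) j.toNat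
            else 0)
           - (if 0 ≤ (-1 - (k : ℤ) + i - j) then
              (-1 : ℚ) ^ j * genBinom (((-1 - (k : ℤ) + i : ℤ) : ℚ))
                (-1 - (k : ℤ) + i - j).toNat
            else 0)) := by
  rcases le_or_gt 0 j with hj | hj
  · obtain ⟨J, rfl⟩ := Int.eq_ofNat_of_zero_le hj
    rw [show p - ((J : ℤ) : ℚ) - 1 = p + (-(J:ℚ) - 1) by push_cast; ring,
      genBinom_vandermonde, Finset.mul_sum]
    refine Finset.sum_congr rfl fun i hi => ?_
    rw [Finset.mem_range] at hi
    have hik : i ≤ k := by omega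
    rw [if_pos (Int.natCast_nonneg J), if_neg (by omega), sub_zero, Int.toNat_natCast,
      zpow_natCast]
    have h1 : (-1:ℚ)^J * genBinom (((-1 - (k : ℤ) + i : ℤ) : ℚ)) J
        = genBinom ((J + (k - i) : ℕ) : ℚ) J := by
      rw [genBinom_reflect]
      congr 1
      push_cast [Nat.cast_sub hik]
      ring
    have h2 : genBinom ((J + (k - i) : ℕ) : ℚ) J = ((J + (k - i)).choose (k - i) : ℚ) := by
      rw [genBinom_natCast]
      congr 1
      rw [← Nat.choose_symm (Nat.le_add_left (k - i) J)]
      congr 1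
      omega
    have h3 : ((J + (k - i)).choose (k - i) : ℚ)
        = (-1:ℚ)^(k - i) * genBinom (-(J:ℚ) - 1) (k - i) := by
      rw [genBinom_reflect, ← genBinom_natCast]
      congr 1
      push_cast [Nat.cast_sub hik]
      ring
    calc (-1:ℚ)^k * (genBinom p i * genBinom (-(J:ℚ) - 1) (k - i))
        = ((-1:ℚ)^i * (-1:ℚ)^(k - i)) * (genBinom p i * genBinom (-(J:ℚ) - 1) (k - i)) := by
          rw [← pow_add, show i + (k - i) = k by omega]
      _ = (-1:ℚ)^i * genBinom p i * ((-1:ℚ)^(k - i) * genBinom (-(J:ℚ) - 1) (k - i)) := by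
          ring
      _ = (-1:ℚ)^i * genBinom p i *
            ((-1:ℚ)^J * genBinom (((-1 - (k : ℤ) + i : ℤ) : ℚ)) J) := by
          rw [h1, h2, h3]
  · obtain ⟨M, rfl⟩ : ∃ M : ℕ, j = -(M : ℤ) - 1 := ⟨(-j - 1).toNat, by omega⟩
    have hz : ((-1:ℚ)) ^ (-(M:ℤ) - 1) = (-1:ℚ) ^ (M + 1) := by
      rw [show -(M:ℤ) - 1 = -((M + 1 : ℕ) : ℤ) by push_cast; ring, zpow_neg, zpow_natCast,
        ← inv_pow, inv_neg, inv_one]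
    rw [show p - ((-(M:ℤ) - 1 : ℤ) : ℚ) - 1 = p + (M:ℚ) by push_cast; ring,
      genBinom_vandermonde, Finset.mul_sum]
    refine Finset.sum_congr rfl fun i hi => ?_
    rw [Finset.mem_range] at hi
    have hik : i ≤ k := by omega
    rw [if_neg (by omega)]
    by_cases hc : (0:ℤ) ≤ -1 - (k:ℤ) + i - (-(M:ℤ) - 1)
    · have hkiM : k - i ≤ M := by omega
      have ht : (-1 - (k:ℤ) + i - (-(M:ℤ) - 1)).toNat = M - (k - i) := by omega
      rw [if_pos hc, ht, hz]
      have h1 : (-1:ℚ)^(M - (k - i)) * genBinom (((-1 - (k : ℤ) + i : ℤ) : ℚ)) (M - (k - i))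
          = (M.choose (k - i) : ℚ) := by
        rw [genBinom_reflect, show ((M - (k - i) : ℕ):ℚ) - 1 - ((-1 - (k : ℤ) + i : ℤ) : ℚ)
            = ((M : ℕ) : ℚ) by push_cast [Nat.cast_sub hkiM, Nat.cast_sub hik]; ring,
          genBinom_natCast, ← Nat.choose_symm hkiM]
      have h2 : genBinom (((-1 - (k : ℤ) + i : ℤ) : ℚ)) (M - (k - i))
          = (-1:ℚ)^(M - (k - i)) * (M.choose (k - i) : ℚ) := by
        rw [← h1, ← mul_assoc, ← pow_add,
          show (M - (k - i)) + (M - (k - i)) = 2 * (M - (k - i)) by ring, pow_mul]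
        norm_num
      rw [h2, genBinom_natCast]
      rw [show (-1:ℚ)^i * genBinom p i *
            (0 - (-1:ℚ)^(M + 1) * ((-1:ℚ)^(M - (k - i)) * (M.choose (k - i) : ℚ)))
          = -((-1:ℚ)^(i + (M + 1) + (M - (k - i)))) * (genBinom p i * (M.choose (k - i) : ℚ))
          by rw [pow_add, pow_add]; ring]
      rw [show i + (M + 1) + (M - (k - i)) = (k + 1) + 2 * (M - (k - i)) by omega,
        pow_add, pow_mul, pow_succ]
      norm_num
    · rw [if_neg hc, sub_zero, genBinom_natCast,
        Nat.choose_eq_zero_of_lt (by omega : M < k - i)]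
      simp
end
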